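/- For every integer n ≥ 2 and every θ ∈ (0, π), one has sin((n-1)θ)/((n-1)·sin θ) − sin((n+1)θ)/((n+1)·sin θ) ≤ ((3 + cos θ)·n/(n²−1))·(1 − sin(nθ)/(n·sin θ)). -/
import Mathlib

set_option maxHeartbeats 2000000

open Real

private lemma askey_step (n s c σ κ : ℝ) (hn : 1 ≤ n) (hs : 0 < s) (hc : 0 < c)
    (hsc : s^2 + c^2 = 1) (hσκ : σ^2 + κ^2 = 1)
    (h : 3*c*σ*κ ≤ n*s*(2+c^2) - 2*n*s*σ^2) :
    3*c*(σ*c+κ*s)*(κ*c-σ*s) ≤ (n+1)*s*(2+c^2) - 2*(n+1)*s*(σ*c+κ*s)^2 := by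
  have hs2 : s^2 ≤ 1 := by nlinarith [sq_nonneg c]
  have hyp : 0 ≤ n*s*(2+c^2) - 2*n*s*σ^2 - 3*c*σ*κ := by linarith
  rcases le_or_gt ((4*n+2)*s^2) 3 with h3 | h3
  · -- case A : small s
    have hμ : 0 < (-8:ℝ)*n^2*s^5 + 16*n^2*s^3 + (-4)*n*s^5 + 8*n*s^3 + (-6)*s^3 + 12*s := by
      nlinarith [mul_pos hs (by nlinarith : (0:ℝ) < 12 - 6*s^2),
        mul_nonneg (mul_nonneg (by linarith : (0:ℝ) ≤ 4*n) (pow_nonneg hs.le 3))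
          (by nlinarith : (0:ℝ) ≤ 2 - s^2),
        mul_nonneg (mul_nonneg (by nlinarith [sq_nonneg n] : (0:ℝ) ≤ 8*n^2) (pow_nonneg hs.le 3))
          (by nlinarith : (0:ℝ) ≤ 2 - s^2)]
    have hlam : 0 ≤ 3 - (4*n+2)*s^2 := by linarith
    have hg : 0 ≤ 12*n^3+24*n^2+6*n-6 - s^2*(16*n^3+16*n^2-2*n-3) + s^2*s^2*(n*(2*n+1)^2) := by
      nlinarith [mul_nonneg hlam (by nlinarith : (0:ℝ) ≤ 4*n^2+2*n),
        mul_nonneg (mul_nonneg (sq_nonneg s) (sq_nonneg s)) (by nlinarith : (0:ℝ) ≤ n*(2*n+1)^2),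
        sq_nonneg s, hn]
    have hrem : 0 ≤ (64:ℝ)*n^4*s^10 + (-256)*n^4*s^8 + 192*n^4*s^6 + 64*n^3*s^10 + (-256)*n^3*s^8
        + 384*n^3*s^6 + 16*n^2*s^10 + 32*n^2*s^8 + (-480)*n^2*s^6 + (-576)*n^2*s^4*c^2
        + 576*n^2*s^4 + 48*n*s^8 + (-96)*n*s^6 := by
      have e : (64:ℝ)*n^4*s^10 + (-256)*n^4*s^8 + 192*n^4*s^6 + 64*n^3*s^10 + (-256)*n^3*s^8
          + 384*n^3*s^6 + 16*n^2*s^10 + 32*n^2*s^8 + (-480)*n^2*s^6 + (-576)*n^2*s^4*c^2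
          + 576*n^2*s^4 + 48*n*s^8 + (-96)*n*s^6
          = 16*n*s^6*(12*n^3+24*n^2+6*n-6 - s^2*(16*n^3+16*n^2-2*n-3) + s^2*s^2*(n*(2*n+1)^2)) := by
        linear_combination ((-576:ℝ)*n^2*s^4) * hsc
      rw [e]
      exact mul_nonneg (mul_nonneg (by linarith : (0:ℝ) ≤ 16*n) (by positivity)) hg
    have hid : 12*((-8:ℝ)*n^2*s^5 + 16*n^2*s^3 + (-4)*n*s^5 + 8*n*s^3 + (-6)*s^3 + 12*s)
          * ((n+1)*s*(2+c^2) - 2*(n+1)*s*(σ*c+κ*s)^2 - 3*c*(σ*c+κ*s)*(κ*c-σ*s))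
        = 4*((-8:ℝ)*n^2*s^5 + 16*n^2*s^3 + (-4)*n*s^5 + 8*n*s^3 + (-6)*s^3 + 12*s)
            * (3 - (4*n+2)*s^2) * (n*s*(2+c^2) - 2*n*s*σ^2 - 3*c*σ*κ)
          + ((-16:ℝ)*n^2*s^5*σ*κ + 32*n^2*s^3*σ*κ + (-8)*n*s^5*σ*κ + 16*n*s^3*σ*κ
              + (-24)*n*s^2*c + (-12)*s^3*σ*κ + 24*s*σ*κ)^2
          + ((-16:ℝ)*n^2*s^5*σ^2 + 8*n^2*s^5 + 32*n^2*s^3*σ^2 + (-24)*n^2*s^3 + (-8)*n*s^5*σ^2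
              + 4*n*s^5 + 16*n*s^3*σ^2 + (-12)*s^3*σ^2 + 24*s*σ^2)^2
          + ((64:ℝ)*n^4*s^10 + (-256)*n^4*s^8 + 192*n^4*s^6 + 64*n^3*s^10 + (-256)*n^3*s^8
              + 384*n^3*s^6 + 16*n^2*s^10 + 32*n^2*s^8 + (-480)*n^2*s^6 + (-576)*n^2*s^4*c^2
              + 576*n^2*s^4 + 48*n*s^8 + (-96)*n*s^6) := by
      linear_combination
        ((-128:ℝ)*n^4*s^8 + 256*n^4*s^6 + (-128)*n^3*s^8 + 192*n^3*s^6*σ^2 + 256*n^3*s^6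
          + (-384)*n^3*s^4*σ^2 + (-32)*n^2*s^8 + 288*n^2*s^6*κ^2 + (-128)*n^2*s^6
          + 288*n^2*s^5*c*σ*κ + (-576)*n^2*s^4*κ^2 + 384*n^2*s^4 + (-576)*n^2*s^3*c*σ*κ
          + (-48)*n*s^6*σ^2 + 144*n*s^6*κ^2 + (-96)*n*s^6 + 144*n*s^5*c*σ*κ + 240*n*s^4*σ^2
          + (-288)*n*s^4*κ^2 + 192*n*s^4 + (-288)*n*s^3*c*σ*κ + (-288)*n*s^2*σ^2
          + (-72)*s^4*σ^2 + 216*s^4*κ^2 + (-72)*s^4 + 216*s^3*c*σ*κ + 144*s^2*σ^2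
          + (-432)*s^2*κ^2 + 144*s^2 + (-432)*s*c*σ*κ) * hsc
        + ((-256:ℝ)*n^4*s^10*σ^2 + 1024*n^4*s^8*σ^2 + (-1024)*n^4*s^6*σ^2 + (-256)*n^3*s^10*σ^2
          + 1024*n^3*s^8*σ^2 + 192*n^3*s^8 + (-1024)*n^3*s^6*σ^2 + (-384)*n^3*s^6
          + (-64)*n^2*s^10*σ^2 + (-128)*n^2*s^8*σ^2 + 1280*n^2*s^6*σ^2 + 288*n^2*s^6
          + (-1536)*n^2*s^4*σ^2 + (-576)*n^2*s^4 + (-192)*n*s^8*σ^2 + (-48)*n*s^8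
          + 768*n*s^6*σ^2 + 384*n*s^6 + (-768)*n*s^4*σ^2 + (-576)*n*s^4 + (-144)*s^6*σ^2
          + (-72)*s^6 + 576*s^4*σ^2 + 360*s^4 + (-576)*s^2*σ^2 + (-432)*s^2) * hσκ
    have hprod : 0 ≤ 4*((-8:ℝ)*n^2*s^5 + 16*n^2*s^3 + (-4)*n*s^5 + 8*n*s^3 + (-6)*s^3 + 12*s)
        * (3 - (4*n+2)*s^2) * (n*s*(2+c^2) - 2*n*s*σ^2 - 3*c*σ*κ) :=
      mul_nonneg (mul_nonneg (by linarith) hlam) hyp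
    have h0 : 0 ≤ 12*((-8:ℝ)*n^2*s^5 + 16*n^2*s^3 + (-4)*n*s^5 + 8*n*s^3 + (-6)*s^3 + 12*s)
        * ((n+1)*s*(2+c^2) - 2*(n+1)*s*(σ*c+κ*s)^2 - 3*c*(σ*c+κ*s)*(κ*c-σ*s)) := by
      rw [hid]
      have q1 := sq_nonneg ((-16:ℝ)*n^2*s^5*σ*κ + 32*n^2*s^3*σ*κ + (-8)*n*s^5*σ*κ + 16*n*s^3*σ*κ
              + (-24)*n*s^2*c + (-12)*s^3*σ*κ + 24*s*σ*κ)
      have q2 := sq_nonneg ((-16:ℝ)*n^2*s^5*σ^2 + 8*n^2*s^5 + 32*n^2*s^3*σ^2 + (-24)*n^2*s^3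
              + (-8)*n*s^5*σ^2 + 4*n*s^5 + 16*n*s^3*σ^2 + (-12)*s^3*σ^2 + 24*s*σ^2)
      linarith
    nlinarith [h0, hμ]
  · -- case B : large s
    have hμB : 0 < 2*(n+1)*s := by positivity
    have u0 : 0 ≤ 8*(n+1)^2*s^2 - 9 := by
      nlinarith [mul_nonneg (by linarith : (0:ℝ) ≤ (4*n+2)*s^2 - 3)
        (by positivity : (0:ℝ) ≤ 8*(n+1)^2), hn]
    have hremB : 0 ≤ (-8:ℝ)*n^2*s^4 + 8*n^2*s^2 + (-16)*n*s^4 + 16*n*s^2 + (-8)*s^4 + 17*s^2 - 9 := by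
      nlinarith [mul_nonneg (by linarith : (0:ℝ) ≤ 1 - s^2) u0]
    have hidB : 4*(2*(n+1)*s)
          * ((n+1)*s*(2+c^2) - 2*(n+1)*s*(σ*c+κ*s)^2 - 3*c*(σ*c+κ*s)*(κ*c-σ*s))
        = ((-4:ℝ)*n*s^2*c + 4*n*s*σ*κ + (-1)*s^2*c + 4*s*σ*κ + (-3)*c^3)^2
          + ((2:ℝ)*n*s^3 + (-2)*n*s*c^2 + 4*n*s*σ^2 + (-2)*n*s + 2*s^3 + 4*s*c^2 + 4*s*σ^2 + (-2)*s)^2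
          + ((-8:ℝ)*n^2*s^4 + 8*n^2*s^2 + (-16)*n*s^4 + 16*n*s^2 + (-8)*s^4 + 17*s^2 - 9) := by
      linear_combination
        ((-4:ℝ)*n^2*s^4 + (-4)*n^2*s^2*c^2 + (-4)*n^2*s^2 + (-8)*n*s^4 + (-8)*n*s^2*c^2
          + (-24)*n*s^2*σ^2 + (-24)*n*s^2*κ^2 + 16*n*s^2 + (-4)*s^4 + (-13)*s^2*c^2
          + (-24)*s^2*σ^2 + (-24)*s^2*κ^2 + 20*s^2 + (-9)*c^4 + (-9)*c^2 - 9) * hsc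
        + ((-16:ℝ)*n^2*s^4 + (-16)*n^2*s^2*σ^2 + (-8)*n*s^4 + (-32)*n*s^2*σ^2 + (-24)*n*s^2
          + 8*s^4 + (-16)*s^2*σ^2 + (-24)*s^2) * hσκ
    have h0 : 0 ≤ 4*(2*(n+1)*s)
        * ((n+1)*s*(2+c^2) - 2*(n+1)*s*(σ*c+κ*s)^2 - 3*c*(σ*c+κ*s)*(κ*c-σ*s)) := by
      rw [hidB]
      have q1 := sq_nonneg ((-4:ℝ)*n*s^2*c + 4*n*s*σ*κ + (-1)*s^2*c + 4*s*σ*κ + (-3)*c^3)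
      have q2 := sq_nonneg ((2:ℝ)*n*s^3 + (-2)*n*s*c^2 + 4*n*s*σ^2 + (-2)*n*s + 2*s^3
          + 4*s*c^2 + 4*s*σ^2 + (-2)*s)
      linarith
    nlinarith [h0, hμB]

private lemma askey_key (t : ℝ) (ht0 : 0 < t) (ht1 : t < π/2) :
    ∀ n : ℕ, 2 ≤ n →
      3*Real.cos t*Real.sin ((n:ℝ)*t)*Real.cos ((n:ℝ)*t)
        ≤ (n:ℝ)*Real.sin t*(2+(Real.cos t)^2) - 2*(n:ℝ)*Real.sin t*(Real.sin ((n:ℝ)*t))^2 := by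
  have hs : 0 < Real.sin t := Real.sin_pos_of_pos_of_lt_pi ht0 (by linarith [Real.pi_pos])
  have hc : 0 < Real.cos t := Real.cos_pos_of_mem_Ioo ⟨by linarith [Real.pi_pos], ht1⟩
  have hsc := Real.sin_sq_add_cos_sq t
  intro n hn
  induction n, hn using Nat.le_induction with
  | base =>
      have e2 : ((2:ℕ):ℝ)*t = 2*t := by norm_num
      rw [e2, Real.sin_two_mul, Real.cos_two_mul]
      have egap : ((2:ℕ):ℝ)*Real.sin t*(2+(Real.cos t)^2)
            - 2*((2:ℕ):ℝ)*Real.sin t*(2*Real.sin t*Real.cos t)^2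
            - 3*Real.cos t*(2*Real.sin t*Real.cos t)*(2*(Real.cos t)^2-1)
          = 4*Real.sin t*((Real.sin t)^2)^2 := by
        push_cast
        linear_combination ((-4:ℝ)*(Real.sin t)^3 + (-12)*Real.sin t*(Real.cos t)^2
          + (-4)*Real.sin t) * hsc
      nlinarith [egap, mul_nonneg hs.le (sq_nonneg ((Real.sin t)^2))]
  | succ n hn ih =>
      have hn1 : (1:ℝ) ≤ (n:ℝ) := by exact_mod_cast Nat.one_le_of_lt hn
      have e1 : ((n+1:ℕ):ℝ)*t = (n:ℝ)*t + t := by push_cast; ring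
      rw [e1, Real.sin_add, Real.cos_add]
      have hstep := askey_step (n:ℝ) (Real.sin t) (Real.cos t)
        (Real.sin ((n:ℝ)*t)) (Real.cos ((n:ℝ)*t)) hn1 hs hc hsc
        (Real.sin_sq_add_cos_sq ((n:ℝ)*t)) (by linarith [ih])
      push_cast
      linarith [hstep]

/-- The Askey–Gasper trigonometric inequality: for every integer `n ≥ 2` and
every `θ ∈ (0, π)`,
`sin((n-1)θ)/((n-1) sin θ) - sin((n+1)θ)/((n+1) sin θ)
  ≤ ((3 + cos θ) n/(n²-1)) (1 - sin(nθ)/(n sin θ))`. -/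
theorem askey_gasper_inequality (n : ℕ) (hn : 2 ≤ n) (θ : ℝ) (hθ : θ ∈ Set.Ioo (0 : ℝ) π) :
    Real.sin (((n : ℝ) - 1) * θ) / (((n : ℝ) - 1) * Real.sin θ)
      - Real.sin (((n : ℝ) + 1) * θ) / (((n : ℝ) + 1) * Real.sin θ) ≤
    (3 + Real.cos θ) * (n : ℝ) / ((n : ℝ) ^ 2 - 1)
      * (1 - Real.sin ((n : ℝ) * θ) / ((n : ℝ) * Real.sin θ)) := by
  obtain ⟨hθ0, hθπ⟩ := hθ
  have hn2 : (2:ℝ) ≤ (n:ℝ) := by exact_mod_cast hn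
  have ht0 : 0 < θ/2 := by linarith
  have ht1 : θ/2 < π/2 := by linarith
  have hθ2t : θ = 2*(θ/2) := by ring
  have hs : 0 < Real.sin (θ/2) := Real.sin_pos_of_pos_of_lt_pi ht0 (by linarith [Real.pi_pos])
  have hc : 0 < Real.cos (θ/2) := Real.cos_pos_of_mem_Ioo ⟨by linarith [Real.pi_pos], ht1⟩
  have hkey := askey_key (θ/2) ht0 ht1 n hn
  have es : Real.sin θ = 2*Real.sin (θ/2)*Real.cos (θ/2) := by
    nth_rewrite 1 [hθ2t]; exact Real.sin_two_mul (θ/2)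
  have ec : Real.cos θ = 1 - 2*(Real.sin (θ/2))^2 := by
    nth_rewrite 1 [hθ2t]; rw [Real.cos_two_mul]
    linear_combination 2 * Real.sin_sq_add_cos_sq (θ/2)
  have enθ : (n:ℝ)*θ = 2*((n:ℝ)*(θ/2)) := by ring
  have eS : Real.sin ((n:ℝ)*θ) = 2*Real.sin ((n:ℝ)*(θ/2))*Real.cos ((n:ℝ)*(θ/2)) := by
    rw [enθ, Real.sin_two_mul]
  have eC : Real.cos ((n:ℝ)*θ) = 1 - 2*(Real.sin ((n:ℝ)*(θ/2)))^2 := by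
    rw [enθ, Real.cos_two_mul]
    linear_combination 2 * Real.sin_sq_add_cos_sq ((n:ℝ)*(θ/2))
  have hG : 0 ≤ (n:ℝ)*Real.sin θ*(3+Real.cos θ+2*Real.cos ((n:ℝ)*θ))
      - 3*Real.sin ((n:ℝ)*θ)*(1+Real.cos θ) := by
    rw [es, ec, eS, eC]
    have e : (n:ℝ)*(2*Real.sin (θ/2)*Real.cos (θ/2))
          *(3+(1 - 2*(Real.sin (θ/2))^2)+2*(1 - 2*(Real.sin ((n:ℝ)*(θ/2)))^2))
          - 3*(2*Real.sin ((n:ℝ)*(θ/2))*Real.cos ((n:ℝ)*(θ/2)))*(1+(1 - 2*(Real.sin (θ/2))^2))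
        = 4*Real.cos (θ/2)*((n:ℝ)*Real.sin (θ/2)*(2+(Real.cos (θ/2))^2)
            - 2*(n:ℝ)*Real.sin (θ/2)*(Real.sin ((n:ℝ)*(θ/2)))^2
            - 3*Real.cos (θ/2)*Real.sin ((n:ℝ)*(θ/2))*Real.cos ((n:ℝ)*(θ/2))) := by
      linear_combination ((-4:ℝ)*(n:ℝ)*Real.sin (θ/2)*Real.cos (θ/2)
        + 12*Real.sin ((n:ℝ)*(θ/2))*Real.cos ((n:ℝ)*(θ/2))) * Real.sin_sq_add_cos_sq (θ/2)
    rw [e]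
    exact mul_nonneg (by linarith) (by linarith [hkey])
  have hs1 : 0 < Real.sin θ := Real.sin_pos_of_pos_of_lt_pi hθ0 hθπ
  have e1 : ((n:ℝ)-1)*θ = (n:ℝ)*θ - θ := by ring
  have e2 : ((n:ℝ)+1)*θ = (n:ℝ)*θ + θ := by ring
  rw [e1, e2, Real.sin_sub, Real.sin_add, ← sub_nonneg]
  have hne1 : ((n:ℝ) - 1) ≠ 0 := by linarith
  have hne2 : ((n:ℝ) + 1) ≠ 0 := by linarith
  have hnne : (n:ℝ) ≠ 0 := by linarith
  have hsne : Real.sin θ ≠ 0 := ne_of_gt hs1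
  have hden : ((n:ℝ)^2 - 1) ≠ 0 := by nlinarith
  have heq : (3 + Real.cos θ) * (n:ℝ) / ((n:ℝ)^2 - 1)
        * (1 - Real.sin ((n:ℝ)*θ)/((n:ℝ)*Real.sin θ))
      - ((Real.sin ((n:ℝ)*θ)*Real.cos θ - Real.cos ((n:ℝ)*θ)*Real.sin θ)
            / (((n:ℝ)-1)*Real.sin θ)
        - (Real.sin ((n:ℝ)*θ)*Real.cos θ + Real.cos ((n:ℝ)*θ)*Real.sin θ)
            / (((n:ℝ)+1)*Real.sin θ))
      = ((n:ℝ)*Real.sin θ*(3+Real.cos θ+2*Real.cos ((n:ℝ)*θ))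
          - 3*Real.sin ((n:ℝ)*θ)*(1+Real.cos θ)) / (((n:ℝ)^2-1)*Real.sin θ) := by
    field_simp
    ring
  rw [heq]
  exact div_nonneg hG (mul_nonneg (by nlinarith [hn2] : (0:ℝ) ≤ (n:ℝ)^2 - 1) hs1.le)
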